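/- Let R be a commutative local ring, n ≥ 1 and 1 ≤ m ≤ n. Let v₁,...,v_m ∈ Rⁿ be vectors such that the n×m matrix M with columns v₁,...,v_m admits a left inverse, i.e. there exists an m×n matrix B over R with B·M = 1_m. Then there exist vectors v_{m+1},...,v_n ∈ Rⁿ such that (v₁,...,v_n) is a basis of the free R-module Rⁿ. -/

import Mathlib

/-- **Completion of a jointly unimodular family to a basis over a local ring**: if
`v₁,…,v_m ∈ Rⁿ` (with `m ≤ n`, `R` a commutative local ring) are such that the `n×m`
matrix with columns `v₁,…,v_m` admits a left inverse, then they can be completed to a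
basis of the free module `Rⁿ`. -/
theorem jointly_unimodular_extend_basis (R : Type*) [CommRing R] [IsLocalRing R]
    (n m : ℕ) (hm1 : 1 ≤ m) (hmn : m ≤ n) (v : Fin m → (Fin n → R))
    (B : Matrix (Fin m) (Fin n) R)
    (hB : B * (Matrix.of fun i j => v j i) = 1) :
    ∃ b : Module.Basis (Fin n) R (Fin n → R), ∀ i : Fin m, b (Fin.castLE hmn i) = v i := by
  classical
  set M : Matrix (Fin n) (Fin m) R := Matrix.of fun i j => v j i with hMdef
  set f : (Fin m → R) →ₗ[R] (Fin n → R) := Matrix.toLin' M with hfdef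
  set g : (Fin n → R) →ₗ[R] (Fin m → R) := Matrix.toLin' B with hgdef
  have hgf : g ∘ₗ f = LinearMap.id := by
    rw [hfdef, hgdef, ← Matrix.toLin'_mul, hB, Matrix.toLin'_one]
  have hgf' : ∀ x, g (f x) = x := fun x => LinearMap.congr_fun hgf x
  have hfinj : Function.Injective f := by
    intro x y h
    have := hgf' x
    rw [h, hgf' y] at this
    exact this.symm
  -- `range f` and `ker g` are complementary
  have hcompl : IsCompl (LinearMap.range f) (LinearMap.ker g) := by
    constructor
    · rw [Submodule.disjoint_def]
      rintro x ⟨y, rfl⟩ hx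
      rw [LinearMap.mem_ker] at hx
      rw [hgf' y] at hx
      rw [hx, map_zero]
    · rw [codisjoint_iff_le_sup]
      intro x _
      refine Submodule.mem_sup.mpr ⟨f (g x), ⟨g x, rfl⟩, x - f (g x), ?_, by abel⟩
      simp [LinearMap.mem_ker, map_sub, hgf']
  -- the kernel of g is a finite free module
  let π : (Fin n → R) →ₗ[R] LinearMap.ker g :=
    LinearMap.codRestrict _ (LinearMap.id - f ∘ₗ g)
      (fun x => by simp [LinearMap.mem_ker, map_sub, hgf'])
  have hπ : ∀ x : LinearMap.ker g, π (x : Fin n → R) = x := by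
    rintro ⟨x, hx⟩
    rw [LinearMap.mem_ker] at hx
    apply Subtype.ext
    simp [π, hx]
  have hπs : Function.Surjective π := fun x => ⟨x, hπ x⟩
  have hfin : Module.Finite R (LinearMap.ker g) := Module.Finite.of_surjective π hπs
  have hproj : Module.Projective R (LinearMap.ker g) :=
    Module.Projective.of_split (LinearMap.ker g).subtype π (LinearMap.ext hπ)
  have hfp : Module.FinitePresentation R (LinearMap.ker g) :=
    Module.finitePresentation_of_projective R _
  have hfree : Module.Free R (LinearMap.ker g) := Module.free_of_flat_of_isLocalRing
  -- range f is free of rank m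
  let eR : (Fin m → R) ≃ₗ[R] LinearMap.range f := LinearEquiv.ofInjective f hfinj
  have hfreeR : Module.Free R (LinearMap.range f) := Module.Free.of_equiv eR
  have hfinR : Module.Finite R (LinearMap.range f) := Module.Finite.equiv eR
  -- the decomposition equivalence
  let e1 : (LinearMap.range f × LinearMap.ker g) ≃ₗ[R] (Fin n → R) :=
    Submodule.prodEquivOfIsCompl _ _ hcompl
  -- rank count
  have hrkR : Module.finrank R (LinearMap.range f) = m := by
    rw [← eR.finrank_eq, Module.finrank_pi]
    simp
  have hrk : m + Module.finrank R (LinearMap.ker g) = n := by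
    have h1 := e1.finrank_eq
    rw [Module.finrank_prod, hrkR, Module.finrank_pi] at h1
    simpa using h1
  -- assemble the basis
  let bR : Module.Basis (Fin m) R (LinearMap.range f) := (Pi.basisFun R (Fin m)).map eR
  let bK : Module.Basis (Fin (Module.finrank R (LinearMap.ker g))) R (LinearMap.ker g) :=
    Module.finBasis R _
  let b0 : Module.Basis (Fin m ⊕ Fin (Module.finrank R (LinearMap.ker g))) R (Fin n → R) :=
    (bR.prod bK).map e1
  let eidx : (Fin m ⊕ Fin (Module.finrank R (LinearMap.ker g))) ≃ Fin n :=
    finSumFinEquiv.trans (finCongr hrk)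
  refine ⟨b0.reindex eidx, fun i => ?_⟩
  have hidx : eidx.symm (Fin.castLE hmn i) = Sum.inl i := by
    rw [Equiv.symm_apply_eq]
    apply Fin.ext
    simp [eidx]
  rw [Module.Basis.reindex_apply, hidx]
  have : b0 (Sum.inl i) = e1 (bR i, 0) := by
    simp [b0, Module.Basis.prod_apply, Module.Basis.map_apply]
  rw [this]
  have he1 : e1 (bR i, 0) = (bR i : Fin n → R) := by
    simp [e1, Submodule.coe_prodEquivOfIsCompl]
  rw [he1]
  have : (bR i : Fin n → R) = f (Pi.single i 1) := by
    simp [bR, eR, LinearEquiv.ofInjective_apply, Pi.basisFun_apply]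
  rw [this]
  funext j
  simp [f, hfdef, Matrix.toLin'_apply, Matrix.mulVec, dotProduct, Pi.single_apply, M]
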